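/- For β > 0 and a matrix Z with SVD Z = U diag(σ) V^T (U, V orthonormal, σ ∈ R^k_+ the positive singular values), the proximal operator of β times the nuclear norm satisfies prox_{β‖·‖_*}(Z) = U diag([σ − β e]_+) V^T, where e = (1,…,1) and [·]_+ is the componentwise positive part. -/

import Mathlib

open Matrix

noncomputable def frobNorm {m n : ℕ} (X : Matrix (Fin m) (Fin n) ℝ) : ℝ :=
  Real.sqrt (∑ i, ∑ j, (X i j) ^ 2)

noncomputable def nuclearNorm {m n : ℕ} (X : Matrix (Fin m) (Fin n) ℝ) : ℝ :=
  ∑ i, Real.sqrt ((Matrix.isHermitian_conjTranspose_mul_self X).eigenvalues i)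

namespace SoftThresh

variable {m n k p q : ℕ}

/-- entrywise inner product -/
noncomputable def mip (A B : Matrix (Fin m) (Fin n) ℝ) : ℝ := ∑ i, ∑ j, A i j * B i j

lemma mip_eq_trace (A B : Matrix (Fin m) (Fin n) ℝ) : mip A B = Matrix.trace (Aᵀ * B) := by
  simp only [mip, Matrix.trace, Matrix.diag, Matrix.mul_apply, Matrix.transpose_apply]
  exact Finset.sum_comm

lemma mip_comm (A B : Matrix (Fin m) (Fin n) ℝ) : mip A B = mip B A := by
  simp [mip, mul_comm]

lemma mip_self_nonneg (X : Matrix (Fin m) (Fin n) ℝ) : 0 ≤ mip X X :=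
  Finset.sum_nonneg fun _ _ => Finset.sum_nonneg fun _ _ => mul_self_nonneg _

lemma frob_sq (X : Matrix (Fin m) (Fin n) ℝ) : frobNorm X ^ 2 = mip X X := by
  rw [frobNorm, Real.sq_sqrt (by positivity)]
  simp [mip, pow_two]

lemma mip_sub_right (A B C : Matrix (Fin m) (Fin n) ℝ) :
    mip A (B - C) = mip A B - mip A C := by
  simp [mip, Matrix.sub_apply, mul_sub, Finset.sum_sub_distrib]

lemma mip_smul_left (c : ℝ) (A B : Matrix (Fin m) (Fin n) ℝ) :
    mip (c • A) B = c * mip A B := by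
  simp [mip, Matrix.smul_apply, Finset.mul_sum, mul_assoc]

lemma mip_sub_self (a b : Matrix (Fin m) (Fin n) ℝ) :
    mip (a - b) (a - b) = mip a a - 2 * mip a b + mip b b := by
  have h : ∀ i j, (a - b) i j * (a - b) i j
      = a i j * a i j - 2 * (a i j * b i j) + b i j * b i j := by
    intro i j; simp only [Matrix.sub_apply]; ring
  calc mip (a - b) (a - b)
      = ∑ i, ∑ j, (a i j * a i j - 2 * (a i j * b i j) + b i j * b i j) :=
        Finset.sum_congr rfl fun i _ => Finset.sum_congr rfl fun j _ => h i j
    _ = mip a a - 2 * mip a b + mip b b := by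
        simp [mip, Finset.sum_add_distrib, Finset.sum_sub_distrib, Finset.mul_sum]

lemma mip_half_self (a b : Matrix (Fin m) (Fin n) ℝ) :
    mip ((1/2 : ℝ) • (a + b)) ((1/2 : ℝ) • (a + b))
      = (1/4) * mip a a + (1/2) * mip a b + (1/4) * mip b b := by
  have h : ∀ i j, ((1/2 : ℝ) • (a + b)) i j * ((1/2 : ℝ) • (a + b)) i j
      = (1/4) * (a i j * a i j) + (1/2) * (a i j * b i j) + (1/4) * (b i j * b i j) := by
    intro i j
    simp only [Matrix.smul_apply, Matrix.add_apply, smul_eq_mul]; ring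
  calc mip ((1/2 : ℝ) • (a + b)) ((1/2 : ℝ) • (a + b))
      = ∑ i, ∑ j, ((1/4) * (a i j * a i j) + (1/2) * (a i j * b i j)
          + (1/4) * (b i j * b i j)) :=
        Finset.sum_congr rfl fun i _ => Finset.sum_congr rfl fun j _ => h i j
    _ = _ := by simp [mip, Finset.sum_add_distrib, Finset.mul_sum]

lemma mip_half_right (A x y : Matrix (Fin m) (Fin n) ℝ) :
    mip A ((1/2 : ℝ) • (x + y)) = (1/2) * mip A x + (1/2) * mip A y := by
  have h : ∀ i j, A i j * ((1/2 : ℝ) • (x + y)) i j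
      = (1/2) * (A i j * x i j) + (1/2) * (A i j * y i j) := by
    intro i j; simp only [Matrix.smul_apply, Matrix.add_apply, smul_eq_mul]; ring
  calc mip A ((1/2 : ℝ) • (x + y))
      = ∑ i, ∑ j, ((1/2) * (A i j * x i j) + (1/2) * (A i j * y i j)) :=
        Finset.sum_congr rfl fun i _ => Finset.sum_congr rfl fun j _ => h i j
    _ = _ := by simp [mip, Finset.sum_add_distrib, Finset.mul_sum]

lemma eq_zero_of_mip_self_nonpos {X : Matrix (Fin m) (Fin n) ℝ} (h : mip X X ≤ 0) :
    X = 0 := by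
  have h0 : mip X X = 0 := le_antisymm h (mip_self_nonneg X)
  ext i j
  have t1 : ∑ j', X i j' * X i j' ≤ mip X X :=
    Finset.single_le_sum (f := fun i' => ∑ j', X i' j' * X i' j')
      (fun _ _ => Finset.sum_nonneg fun _ _ => mul_self_nonneg _) (Finset.mem_univ i)
  have t2 : X i j * X i j ≤ ∑ j', X i j' * X i j' :=
    Finset.single_le_sum (f := fun j' => X i j' * X i j') (fun _ _ => mul_self_nonneg _) (Finset.mem_univ j)
  have : X i j * X i j = 0 :=
    le_antisymm (by linarith) (mul_self_nonneg _)
  simpa using mul_self_eq_zero.mp this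

lemma cs (f g : Fin m → ℝ) :
    ∑ i, f i * g i ≤ Real.sqrt (∑ i, f i ^ 2) * Real.sqrt (∑ i, g i ^ 2) := by
  have h2 := Finset.sum_mul_sq_le_sq_mul_sq Finset.univ f g
  calc ∑ i, f i * g i ≤ |∑ i, f i * g i| := le_abs_self _
    _ = Real.sqrt ((∑ i, f i * g i) ^ 2) := (Real.sqrt_sq_eq_abs _).symm
    _ ≤ Real.sqrt ((∑ i, f i ^ 2) * ∑ i, g i ^ 2) := Real.sqrt_le_sqrt h2
    _ = _ := Real.sqrt_mul (Finset.sum_nonneg fun i _ => sq_nonneg _) _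

lemma dp_self (x : Fin m → ℝ) : x ⬝ᵥ x = ∑ i, x i ^ 2 := by
  simp [dotProduct, pow_two]

lemma sumsq_mulVec (A : Matrix (Fin m) (Fin n) ℝ) (v : Fin n → ℝ) :
    ∑ i, (A *ᵥ v) i ^ 2 = v ⬝ᵥ ((Aᵀ * A) *ᵥ v) := by
  rw [← Matrix.mulVec_mulVec, Matrix.dotProduct_mulVec, ← Matrix.mulVec_transpose,
    Matrix.transpose_transpose, dp_self]

variable {m n k : ℕ}

lemma spectral_pack (Y : Matrix (Fin m) (Fin n) ℝ) :
    ∃ W : Matrix (Fin n) (Fin n) ℝ, Wᵀ * W = 1 ∧ W * Wᵀ = 1 ∧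
      Yᵀ * Y = W * Matrix.diagonal
        (Matrix.isHermitian_conjTranspose_mul_self Y).eigenvalues * Wᵀ := by
  set H := Matrix.isHermitian_conjTranspose_mul_self Y with hH
  refine ⟨(Matrix.IsHermitian.eigenvectorUnitary H : Matrix (Fin n) (Fin n) ℝ), ?_, ?_, ?_⟩
  · have h := Matrix.mem_unitaryGroup_iff'.mp (Matrix.IsHermitian.eigenvectorUnitary H).2
    rw [Matrix.star_eq_conjTranspose] at h
    simpa [Matrix.conjTranspose_eq_transpose_of_trivial] using h
  · have h := Matrix.mem_unitaryGroup_iff.mp (Matrix.IsHermitian.eigenvectorUnitary H).2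
    rw [Matrix.star_eq_conjTranspose] at h
    simpa [Matrix.conjTranspose_eq_transpose_of_trivial] using h
  · have h := H.spectral_theorem
    rw [Unitary.conjStarAlgAut_apply, Matrix.star_eq_conjTranspose] at h
    simp only [RCLike.ofReal_real_eq_id, Function.id_comp] at h
    simpa [Matrix.conjTranspose_eq_transpose_of_trivial] using h


lemma cross (U : Matrix (Fin m) (Fin k) ℝ) (V : Matrix (Fin n) (Fin k) ℝ)
    (hU : Uᵀ * U = 1) (a b : Fin k → ℝ) :
    (U * Matrix.diagonal a * Vᵀ)ᵀ * (U * Matrix.diagonal b * Vᵀ)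
      = V * Matrix.diagonal (fun i => a i * b i) * Vᵀ := by
  have h1 : (U * Matrix.diagonal a * Vᵀ)ᵀ = V * (Matrix.diagonal a * Uᵀ) := by
    rw [Matrix.transpose_mul, Matrix.transpose_mul, Matrix.transpose_transpose,
      Matrix.diagonal_transpose]
  rw [h1]
  calc V * (Matrix.diagonal a * Uᵀ) * (U * Matrix.diagonal b * Vᵀ)
      = V * (Matrix.diagonal a * ((Uᵀ * U) * (Matrix.diagonal b * Vᵀ))) := by
        simp only [Matrix.mul_assoc]
    _ = V * (Matrix.diagonal a * (Matrix.diagonal b * Vᵀ)) := by rw [hU, Matrix.one_mul]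
    _ = V * Matrix.diagonal (fun i => a i * b i) * Vᵀ := by
        rw [← Matrix.mul_assoc (Matrix.diagonal a), Matrix.diagonal_mul_diagonal,
          ← Matrix.mul_assoc]

lemma quad_proj (V : Matrix (Fin n) (Fin k) ℝ) (hV : Vᵀ * V = 1)
    (e : Fin k → ℝ) (he : ∀ j, e j ≤ 1) (v : Fin n → ℝ) :
    v ⬝ᵥ ((V * Matrix.diagonal e * Vᵀ) *ᵥ v) ≤ ∑ i, v i ^ 2 := by
  set u := Vᵀ *ᵥ v with hu
  have h1 : (V * Matrix.diagonal e * Vᵀ) *ᵥ v = V *ᵥ (Matrix.diagonal e *ᵥ u) := by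
    rw [← Matrix.mulVec_mulVec, ← Matrix.mulVec_mulVec]
  have hvV : ∀ x : Fin k → ℝ, v ⬝ᵥ (V *ᵥ x) = u ⬝ᵥ x := by
    intro x
    rw [Matrix.dotProduct_mulVec, hu, Matrix.mulVec_transpose]
  have h2 : v ⬝ᵥ ((V * Matrix.diagonal e * Vᵀ) *ᵥ v) = ∑ j, u j * (e j * u j) := by
    rw [h1, hvV]
    simp [dotProduct, Matrix.mulVec_diagonal]
  have h3 : ∑ j, u j * (e j * u j) ≤ ∑ j, u j * u j := by
    apply Finset.sum_le_sum
    intro j _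
    have : e j * (u j * u j) ≤ 1 * (u j * u j) :=
      mul_le_mul_of_nonneg_right (he j) (mul_self_nonneg _)
    nlinarith [this]
  have hbessel : ∑ j, u j * u j ≤ ∑ i, v i ^ 2 := by
    have hVu : (V *ᵥ u) ⬝ᵥ (V *ᵥ u) = u ⬝ᵥ u := by
      rw [Matrix.dotProduct_mulVec, ← Matrix.mulVec_transpose, Matrix.mulVec_mulVec,
        hV, Matrix.one_mulVec]
    have hvVu : v ⬝ᵥ (V *ᵥ u) = u ⬝ᵥ u := hvV u
    have hnn : 0 ≤ (v - V *ᵥ u) ⬝ᵥ (v - V *ᵥ u) := by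
      rw [dp_self]; positivity
    rw [sub_dotProduct, dotProduct_sub, dotProduct_sub] at hnn
    have hcomm : (V *ᵥ u) ⬝ᵥ v = u ⬝ᵥ u := by rw [dotProduct_comm]; exact hvVu
    have huu : u ⬝ᵥ u = ∑ j, u j * u j := by simp [dotProduct]
    have hvv : v ⬝ᵥ v = ∑ i, v i ^ 2 := dp_self v
    linarith [hnn, hvVu, hcomm, hVu]
  rw [h2]; linarith

lemma BtB (Y : Matrix (Fin m) (Fin n) ℝ) (W : Matrix (Fin n) (Fin n) ℝ)
    (hWtW : Wᵀ * W = 1)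
    (hYY : Yᵀ * Y = W * Matrix.diagonal
      (Matrix.isHermitian_conjTranspose_mul_self Y).eigenvalues * Wᵀ) :
    (Y * W)ᵀ * (Y * W)
      = Matrix.diagonal (Matrix.isHermitian_conjTranspose_mul_self Y).eigenvalues := by
  set μ := (Matrix.isHermitian_conjTranspose_mul_self Y).eigenvalues
  calc (Y * W)ᵀ * (Y * W) = Wᵀ * ((Yᵀ * Y) * W) := by
        rw [Matrix.transpose_mul]; simp only [Matrix.mul_assoc]
    _ = Wᵀ * (W * Matrix.diagonal μ * Wᵀ * W) := by rw [hYY]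
    _ = (Wᵀ * W) * (Matrix.diagonal μ * (Wᵀ * W)) := by simp only [Matrix.mul_assoc]
    _ = Matrix.diagonal μ := by rw [hWtW, Matrix.one_mul, Matrix.mul_one]

lemma col_sq_one {n k : ℕ} (V : Matrix (Fin n) (Fin k) ℝ) (hV : Vᵀ * V = 1) (j : Fin k) :
    ∑ a, V a j ^ 2 = 1 := by
  have h := congrFun (congrFun hV j) j
  simp only [Matrix.mul_apply, Matrix.transpose_apply, Matrix.one_apply_eq] at h
  simpa [pow_two] using h

lemma mip_le_nuclear (G Y : Matrix (Fin m) (Fin n) ℝ)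
    (hG : ∀ v : Fin n → ℝ, ∑ i, (G *ᵥ v) i ^ 2 ≤ ∑ j, v j ^ 2) :
    mip G Y ≤ nuclearNorm Y := by
  obtain ⟨W, hWtW, hWWt, hYY⟩ := spectral_pack Y
  set μ := (Matrix.isHermitian_conjTranspose_mul_self Y).eigenvalues with hμdef
  have hμ : ∀ j, 0 ≤ μ j := fun j =>
    Matrix.eigenvalues_conjTranspose_mul_self_nonneg Y j
  -- mip G Y = mip (G*W) (Y*W)
  have key : mip G Y = ∑ j, ∑ i, (G * W) i j * (Y * W) i j := by
    rw [mip_eq_trace]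
    have h1 : Matrix.trace (Gᵀ * Y) = Matrix.trace ((G * W)ᵀ * (Y * W)) := by
      rw [Matrix.transpose_mul]
      calc Matrix.trace (Gᵀ * Y)
          = Matrix.trace ((Gᵀ * Y) * (W * Wᵀ)) := by rw [hWWt, Matrix.mul_one]
        _ = Matrix.trace (Wᵀ * ((Gᵀ * Y) * W)) := by
            rw [← Matrix.mul_assoc, Matrix.trace_mul_comm]
        _ = Matrix.trace (Wᵀ * Gᵀ * (Y * W)) := by simp only [Matrix.mul_assoc]
    rw [h1, ← mip_eq_trace, mip]
    exact Finset.sum_comm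
  have colY : ∀ j, ∑ i, (Y * W) i j ^ 2 = μ j := by
    intro j
    have h := congrFun (congrFun (BtB Y W hWtW hYY) j) j
    simp only [Matrix.mul_apply, Matrix.transpose_apply, Matrix.diagonal_apply_eq] at h
    simpa [pow_two, Matrix.mul_apply, hμdef] using h
  have colG : ∀ j, ∑ i, (G * W) i j ^ 2 ≤ 1 := by
    intro j
    have h := hG (fun a => W a j)
    have heq : ∀ i, (G *ᵥ fun a => W a j) i = (G * W) i j := by
      intro i; simp [Matrix.mulVec, dotProduct, Matrix.mul_apply]
    calc ∑ i, (G * W) i j ^ 2 = ∑ i, (G *ᵥ fun a => W a j) i ^ 2 := by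
          exact Finset.sum_congr rfl fun i _ => by rw [heq]
      _ ≤ ∑ a, (W a j) ^ 2 := h
      _ = 1 := col_sq_one W hWtW j
  rw [key, nuclearNorm]
  apply Finset.sum_le_sum
  intro j _
  calc ∑ i, (G * W) i j * (Y * W) i j
      ≤ Real.sqrt (∑ i, (G * W) i j ^ 2) * Real.sqrt (∑ i, (Y * W) i j ^ 2) :=
        cs _ _
    _ ≤ 1 * Real.sqrt (μ j) := by
        rw [colY]
        exact mul_le_mul_of_nonneg_right (Real.sqrt_le_one.mpr (colG j)) (Real.sqrt_nonneg _)
    _ = Real.sqrt (μ j) := one_mul _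

lemma exists_dual (X : Matrix (Fin m) (Fin n) ℝ) :
    ∃ G : Matrix (Fin m) (Fin n) ℝ,
      (∀ v : Fin n → ℝ, ∑ i, (G *ᵥ v) i ^ 2 ≤ ∑ j, v j ^ 2) ∧
        mip G X = nuclearNorm X := by
  obtain ⟨W, hWtW, hWWt, hXX⟩ := spectral_pack X
  set μ := (Matrix.isHermitian_conjTranspose_mul_self X).eigenvalues with hμdef
  have hμ : ∀ j, 0 ≤ μ j := fun j =>
    Matrix.eigenvalues_conjTranspose_mul_self_nonneg X j
  set c : Fin n → ℝ := fun j => if μ j = 0 then 0 else (Real.sqrt (μ j))⁻¹ with hc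
  set B := X * W with hB
  have hBtB : Bᵀ * B = Matrix.diagonal μ := BtB X W hWtW hXX
  refine ⟨B * Matrix.diagonal c * Wᵀ, ?_, ?_⟩
  · intro v
    rw [sumsq_mulVec]
    have hGtG : (B * Matrix.diagonal c * Wᵀ)ᵀ * (B * Matrix.diagonal c * Wᵀ)
        = W * Matrix.diagonal (fun j => c j * (μ j * c j)) * Wᵀ := by
      have h1 : (B * Matrix.diagonal c * Wᵀ)ᵀ = W * (Matrix.diagonal c * Bᵀ) := by
        rw [Matrix.transpose_mul, Matrix.transpose_mul, Matrix.transpose_transpose,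
          Matrix.diagonal_transpose]
      rw [h1]
      calc W * (Matrix.diagonal c * Bᵀ) * (B * Matrix.diagonal c * Wᵀ)
          = W * (Matrix.diagonal c * ((Bᵀ * B) * (Matrix.diagonal c * Wᵀ))) := by
            simp only [Matrix.mul_assoc]
        _ = W * (Matrix.diagonal c * (Matrix.diagonal μ * (Matrix.diagonal c * Wᵀ))) := by
            rw [hBtB]
        _ = W * Matrix.diagonal (fun j => c j * (μ j * c j)) * Wᵀ := by
            rw [← Matrix.mul_assoc (Matrix.diagonal μ), Matrix.diagonal_mul_diagonal,
              ← Matrix.mul_assoc (Matrix.diagonal c), Matrix.diagonal_mul_diagonal,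
              ← Matrix.mul_assoc]
    rw [hGtG]
    apply quad_proj W hWtW _ _ v
    intro j
    by_cases h : μ j = 0
    · simp [hc, h]
    · have hpos : 0 < μ j := lt_of_le_of_ne (hμ j) (Ne.symm h)
      have hs : Real.sqrt (μ j) * Real.sqrt (μ j) = μ j := Real.mul_self_sqrt (hμ j)
      have hsne : Real.sqrt (μ j) ≠ 0 := by positivity
      simp only [hc, if_neg h]
      have hrw : (Real.sqrt (μ j))⁻¹ * (μ j * (Real.sqrt (μ j))⁻¹)
          = (μ j) * ((Real.sqrt (μ j) * Real.sqrt (μ j))⁻¹) := by ring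
      rw [hrw, hs, mul_inv_cancel₀ h]
  · rw [mip_eq_trace]
    have hBtX : Bᵀ * X = Matrix.diagonal μ * Wᵀ := by
      calc Bᵀ * X = Wᵀ * (Xᵀ * X) := by rw [hB, Matrix.transpose_mul, Matrix.mul_assoc]
        _ = Wᵀ * (W * Matrix.diagonal μ * Wᵀ) := by rw [hXX]
        _ = (Wᵀ * W) * (Matrix.diagonal μ * Wᵀ) := by simp only [Matrix.mul_assoc]
        _ = Matrix.diagonal μ * Wᵀ := by rw [hWtW, Matrix.one_mul]
    have h1 : (B * Matrix.diagonal c * Wᵀ)ᵀ = W * (Matrix.diagonal c * Bᵀ) := by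
      rw [Matrix.transpose_mul, Matrix.transpose_mul, Matrix.transpose_transpose,
        Matrix.diagonal_transpose]
    have h2 : (B * Matrix.diagonal c * Wᵀ)ᵀ * X
        = W * Matrix.diagonal (fun j => c j * μ j) * Wᵀ := by
      rw [h1]
      calc W * (Matrix.diagonal c * Bᵀ) * X
          = W * (Matrix.diagonal c * (Bᵀ * X)) := by simp only [Matrix.mul_assoc]
        _ = W * (Matrix.diagonal c * (Matrix.diagonal μ * Wᵀ)) := by rw [hBtX]
        _ = W * Matrix.diagonal (fun j => c j * μ j) * Wᵀ := by
            rw [← Matrix.mul_assoc (Matrix.diagonal c), Matrix.diagonal_mul_diagonal,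
              ← Matrix.mul_assoc]
    rw [h2]
    have h3 : Matrix.trace (W * Matrix.diagonal (fun j => c j * μ j) * Wᵀ)
        = ∑ j, c j * μ j := by
      rw [Matrix.trace_mul_cycle, hWtW, Matrix.one_mul, Matrix.trace_diagonal]
    rw [h3, nuclearNorm]
    apply Finset.sum_congr rfl
    intro j _
    rw [← hμdef]
    by_cases h : μ j = 0
    · simp [hc, h]
    · have hs : Real.sqrt (μ j) * Real.sqrt (μ j) = μ j := Real.mul_self_sqrt (hμ j)
      have hsne : Real.sqrt (μ j) ≠ 0 := by
        have hpos : 0 < μ j := lt_of_le_of_ne (hμ j) (Ne.symm h)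
        positivity
      simp only [hc, if_neg h]
      field_simp
      rw [Real.sq_sqrt (hμ j)]

lemma sandwich_opnorm (U : Matrix (Fin m) (Fin k) ℝ) (V : Matrix (Fin n) (Fin k) ℝ)
    (hU : Uᵀ * U = 1) (hV : Vᵀ * V = 1) (t : Fin k → ℝ) (ht : ∀ i, t i * t i ≤ 1) :
    ∀ v : Fin n → ℝ, ∑ i, ((U * Matrix.diagonal t * Vᵀ) *ᵥ v) i ^ 2 ≤ ∑ j, v j ^ 2 := by
  intro v
  rw [sumsq_mulVec, cross U V hU t t]
  exact quad_proj V hV _ ht v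

lemma mip_sandwich (U : Matrix (Fin m) (Fin k) ℝ) (V : Matrix (Fin n) (Fin k) ℝ)
    (hU : Uᵀ * U = 1) (hV : Vᵀ * V = 1) (a b : Fin k → ℝ) :
    mip (U * Matrix.diagonal a * Vᵀ) (U * Matrix.diagonal b * Vᵀ) = ∑ i, a i * b i := by
  rw [mip_eq_trace, cross U V hU a b, Matrix.trace_mul_cycle, hV, Matrix.one_mul,
    Matrix.trace_diagonal]

lemma nuclear_sandwich_le (U : Matrix (Fin m) (Fin k) ℝ) (V : Matrix (Fin n) (Fin k) ℝ)
    (hU : Uᵀ * U = 1) (hV : Vᵀ * V = 1) (d : Fin k → ℝ) (hd : ∀ i, 0 ≤ d i) :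
    nuclearNorm (U * Matrix.diagonal d * Vᵀ) ≤ ∑ i, d i := by
  obtain ⟨G, hGnorm, hGeq⟩ := exists_dual (U * Matrix.diagonal d * Vᵀ)
  rw [← hGeq, mip_eq_trace]
  have h1 : Matrix.trace (Gᵀ * (U * Matrix.diagonal d * Vᵀ))
      = ∑ i, d i * (Vᵀ * (Gᵀ * U)) i i := by
    have : Gᵀ * (U * Matrix.diagonal d * Vᵀ)
        = (Gᵀ * U) * Matrix.diagonal d * Vᵀ := by simp only [Matrix.mul_assoc]
    rw [this, Matrix.trace_mul_cycle]
    simp [Matrix.trace, Matrix.diag, Matrix.mul_apply, Matrix.diagonal_apply,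
      mul_comm]
  rw [h1]
  have h2 : ∀ i, (Vᵀ * (Gᵀ * U)) i i ≤ 1 := by
    intro i
    have hentry : (Vᵀ * (Gᵀ * U)) i i = ∑ b, (G *ᵥ fun a => V a i) b * U b i := by
      simp only [Matrix.mul_apply, Matrix.transpose_apply, Matrix.mulVec,
        dotProduct, Finset.mul_sum, Finset.sum_mul]
      rw [Finset.sum_comm]
      apply Finset.sum_congr rfl
      intro b _
      apply Finset.sum_congr rfl
      intro a _
      ring
    rw [hentry]
    calc ∑ b, (G *ᵥ fun a => V a i) b * U b i
        ≤ Real.sqrt (∑ b, (G *ᵥ fun a => V a i) b ^ 2) * Real.sqrt (∑ b, U b i ^ 2) :=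
          cs _ _
      _ ≤ 1 := by
          rw [col_sq_one U hU i, Real.sqrt_one, mul_one]
          apply Real.sqrt_le_one.mpr
          calc ∑ b, (G *ᵥ fun a => V a i) b ^ 2 ≤ ∑ a, (V a i) ^ 2 := hGnorm _
            _ = 1 := col_sq_one V hV i
  calc ∑ i, d i * (Vᵀ * (Gᵀ * U)) i i ≤ ∑ i, d i * 1 :=
        Finset.sum_le_sum fun i _ => mul_le_mul_of_nonneg_left (h2 i) (hd i)
    _ = ∑ i, d i := by simp

end SoftThresh

open SoftThresh

/-- `P` is the proximal point of `g` at `Z`, i.e. a minimizer of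
`Y ↦ (1/2)‖Z − Y‖² + g(Y)` (Frobenius norm). -/
def IsProxPoint {m n : ℕ} (g : Matrix (Fin m) (Fin n) ℝ → ℝ)
    (Z P : Matrix (Fin m) (Fin n) ℝ) : Prop :=
  ∀ Y, (1 / 2) * frobNorm (Z - P) ^ 2 + g P ≤ (1 / 2) * frobNorm (Z - Y) ^ 2 + g Y

/-- Singular value soft-thresholding: the proximal operator of `β‖·‖_*` at
`Z = U diag(σ) Vᵀ` is `U diag([σ − β]₊) Vᵀ`, and it is the unique proximal point. -/
theorem prox_nuclearNorm_soft_threshold {m n k : ℕ}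
    (β : ℝ) (hβ : 0 < β)
    (Z : Matrix (Fin m) (Fin n) ℝ)
    (U : Matrix (Fin m) (Fin k) ℝ) (V : Matrix (Fin n) (Fin k) ℝ) (σ : Fin k → ℝ)
    (hU : Uᵀ * U = 1) (hV : Vᵀ * V = 1) (hσ : ∀ i, 0 < σ i)
    (hSVD : Z = U * Matrix.diagonal σ * Vᵀ) :
    IsProxPoint (fun Y => β * nuclearNorm Y) Z
        (U * Matrix.diagonal (fun i => max (σ i - β) 0) * Vᵀ) ∧
      ∀ P, IsProxPoint (fun Y => β * nuclearNorm Y) Z P →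
        P = U * Matrix.diagonal (fun i => max (σ i - β) 0) * Vᵀ := by
  have hβ' : β ≠ 0 := ne_of_gt hβ
  set d : Fin k → ℝ := fun i => max (σ i - β) 0 with hd_def
  set t : Fin k → ℝ := fun i => min (σ i) β / β with ht_def
  set P : Matrix (Fin m) (Fin n) ℝ := U * Matrix.diagonal d * Vᵀ with hP_def
  set G : Matrix (Fin m) (Fin n) ℝ := U * Matrix.diagonal t * Vᵀ with hG_def
  have hd0 : ∀ i, 0 ≤ d i := fun i => le_max_right _ _
  have ht01 : ∀ i, t i * t i ≤ 1 := by
    intro i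
    have h1 : 0 ≤ t i := by
      simp only [ht_def]
      exact div_nonneg (le_min (hσ i).le hβ.le) hβ.le
    have h2 : t i ≤ 1 := by
      simp only [ht_def]
      exact (div_le_one hβ).mpr (min_le_right _ _)
    nlinarith
  have htd : ∀ i, t i * d i = d i := by
    intro i
    rcases le_total (σ i) β with h | h
    · have hdz : d i = 0 := by simp only [hd_def]; exact max_eq_right (by linarith)
      rw [hdz, mul_zero]
    · have ht1 : t i = 1 := by
        simp only [ht_def]; rw [min_eq_right h, div_self hβ']
      rw [ht1, one_mul]
  have hσd : ∀ i, σ i - d i = β * t i := by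
    intro i
    simp only [hd_def, ht_def]
    rcases le_total (σ i) β with h | h
    · rw [max_eq_right (by linarith), min_eq_left h]
      field_simp
      simp
    · rw [max_eq_left (by linarith), min_eq_right h, div_self hβ', mul_one]
      ring
  have hZP : Z - P = β • G := by
    rw [hSVD, hP_def, hG_def]
    have h1 : U * Matrix.diagonal σ * Vᵀ - U * Matrix.diagonal d * Vᵀ
        = U * Matrix.diagonal (fun i => σ i - d i) * Vᵀ := by
      rw [← Matrix.sub_mul, ← Matrix.mul_sub, ← Matrix.diagonal_sub]
    rw [h1]
    have h2 : (fun i => σ i - d i) = fun i => β * t i := funext hσd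
    rw [h2]
    have h3 : Matrix.diagonal (fun i => β * t i) = β • Matrix.diagonal t := by
      ext i j
      simp only [Matrix.smul_apply, Matrix.diagonal_apply, smul_eq_mul, mul_ite, mul_zero]
    rw [h3, Matrix.mul_smul, Matrix.smul_mul]
  have hGop := sandwich_opnorm U V hU hV t ht01
  have e4 : nuclearNorm P ≤ mip G P := by
    rw [hP_def, hG_def, mip_sandwich U V hU hV t d]
    calc nuclearNorm (U * Matrix.diagonal d * Vᵀ) ≤ ∑ i, d i :=
          nuclear_sandwich_le U V hU hV d hd0
      _ = ∑ i, t i * d i := by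
          exact (Finset.sum_congr rfl fun i _ => (htd i).symm)
  have hprox : IsProxPoint (fun Y => β * nuclearNorm Y) Z P := by
    intro Y
    show (1/2) * frobNorm (Z - P) ^ 2 + β * nuclearNorm P
        ≤ (1/2) * frobNorm (Z - Y) ^ 2 + β * nuclearNorm Y
    have e1 : frobNorm (Z - Y) ^ 2
        = frobNorm (Z - P) ^ 2 - 2 * mip (Z - P) (Y - P) + frobNorm (Y - P) ^ 2 := by
      have hzy : Z - Y = (Z - P) - (Y - P) := by abel
      rw [hzy, frob_sq, mip_sub_self, ← frob_sq, ← frob_sq]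
    have e2 : mip (Z - P) (Y - P) = β * (mip G Y - mip G P) := by
      rw [hZP, mip_smul_left, mip_sub_right]
    have e3' : β * mip G Y ≤ β * nuclearNorm Y :=
      mul_le_mul_of_nonneg_left (mip_le_nuclear G Y hGop) hβ.le
    have e4' : β * nuclearNorm P ≤ β * mip G P := mul_le_mul_of_nonneg_left e4 hβ.le
    have e5 : 0 ≤ frobNorm (Y - P) ^ 2 := sq_nonneg _
    linarith [e1, e2, e3', e4', e5]
  refine ⟨hprox, ?_⟩
  intro P₁ hP₁
  have h1 : (1/2) * frobNorm (Z - P) ^ 2 + β * nuclearNorm P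
      ≤ (1/2) * frobNorm (Z - P₁) ^ 2 + β * nuclearNorm P₁ := hprox P₁
  have h2 : (1/2) * frobNorm (Z - P₁) ^ 2 + β * nuclearNorm P₁
      ≤ (1/2) * frobNorm (Z - P) ^ 2 + β * nuclearNorm P := hP₁ P
  set M : Matrix (Fin m) (Fin n) ℝ := (1/2 : ℝ) • (P₁ + P) with hM_def
  have h3 : (1/2) * frobNorm (Z - P₁) ^ 2 + β * nuclearNorm P₁
      ≤ (1/2) * frobNorm (Z - M) ^ 2 + β * nuclearNorm M := hP₁ M
  have hZM : Z - M = (1/2 : ℝ) • ((Z - P₁) + (Z - P)) := by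
    rw [hM_def]
    ext i j
    simp only [Matrix.sub_apply, Matrix.add_apply, Matrix.smul_apply, smul_eq_mul]
    ring
  have epar : frobNorm (Z - M) ^ 2 = (1/4) * mip (Z - P₁) (Z - P₁)
      + (1/2) * mip (Z - P₁) (Z - P) + (1/4) * mip (Z - P) (Z - P) := by
    rw [frob_sq, hZM, mip_half_self]
  have ever : frobNorm (P₁ - P) ^ 2 = mip (Z - P) (Z - P)
      - 2 * mip (Z - P) (Z - P₁) + mip (Z - P₁) (Z - P₁) := by
    have hpp : P₁ - P = (Z - P) - (Z - P₁) := by abel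
    rw [hpp, frob_sq, mip_sub_self]
  have hcomm : mip (Z - P) (Z - P₁) = mip (Z - P₁) (Z - P) := mip_comm _ _
  have hconv : β * nuclearNorm M
      ≤ β * ((1/2) * nuclearNorm P₁ + (1/2) * nuclearNorm P) := by
    apply mul_le_mul_of_nonneg_left _ hβ.le
    obtain ⟨G₀, hop, heq⟩ := exists_dual M
    have hmix : mip G₀ M = (1/2) * mip G₀ P₁ + (1/2) * mip G₀ P := by
      rw [hM_def]; exact mip_half_right _ _ _
    have l1 := mip_le_nuclear G₀ P₁ hop
    have l2 := mip_le_nuclear G₀ P hop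
    rw [← heq, hmix]; linarith
  have hq1 := frob_sq (Z - P₁)
  have hq2 := frob_sq (Z - P)
  have hkey : frobNorm (P₁ - P) ^ 2 ≤ 0 := by linarith
  have hzero : P₁ - P = 0 := eq_zero_of_mip_self_nonpos (by rw [← frob_sq]; exact hkey)
  exact sub_eq_zero.mp hzero
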